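/- Let Σ ⊆ AP \ {wht, shdw} be finite with an injective map σ ↦ σ̃ such that σ̃ ∉ Σ and σ̃ ≠ σ for each σ ∈ Σ. The formula ψ^{truly-Σ}_shadowy, defined as the conjunction of ψ_shadowy and of φ_transfer^{σ,σ̃} over all σ ∈ Σ, defines exactly the truly Σ-shadowy words: for every finite word w, w,0 ⊨ ψ^{truly-Σ}_shadowy iff w is truly Σ-shadowy. -/

import Mathlib

/- STATEMENT 10: ψ^{truly-Sig}_shadowy defines exactly the truly Sig-shadowy words. -/

namespace TrulyShadowy10

abbrev Word := List (Set ℕ)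

inductive Formula where
  | atom (a : ℕ)
  | neg (φ : Formula)
  | conj (φ ψ : Formula)
  | fut (φ : Formula)
  | half (φ : Formula)

def Sat (w : Word) : ℕ → Formula → Prop
  | i, .atom a => a ∈ w.getD i ∅
  | i, .neg φ => ¬ Sat w i φ
  | i, .conj φ ψ => Sat w i φ ∧ Sat w i ψ
  | i, .fut φ => ∃ j, i ≤ j ∧ j < w.length ∧ Sat w j φ
  | i, .half φ => 2 * Set.ncard {j | j < i ∧ Sat w j φ} = i

def fdisj (φ ψ : Formula) : Formula := .neg (.conj (.neg φ) (.neg ψ))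
def fimpl (φ ψ : Formula) : Formula := fdisj (.neg φ) ψ
def fiff (φ ψ : Formula) : Formula := .conj (fimpl φ ψ) (fimpl ψ φ)
def G (φ : Formula) : Formula := .neg (.fut (.neg φ))
def ftop : Formula := .neg (.conj (.atom 0) (.neg (.atom 0)))
def bigConj (l : List Formula) : Formula := l.foldr .conj ftop

def φinit (wht shdw : ℕ) : Formula :=
  .conj (.atom wht)
    (.conj (G (fiff (.atom wht) (.neg (.atom shdw))))
           (G (fimpl (.atom wht) (.fut (.atom shdw)))))

def ψshadowy (wht shdw : ℕ) : Formula :=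
  .conj (φinit wht shdw) (G (fiff (.half (.atom wht)) (.atom wht)))

def φlast (shdw : ℕ) : Formula := G (.atom shdw)
def φstl (wht shdw : ℕ) : Formula := .conj (.atom wht) (G (fdisj (.atom wht) (φlast shdw)))

def φtransfer (wht shdw σ σt : ℕ) : Formula :=
  .conj (ψshadowy wht shdw)
    (.conj (G (fimpl (.atom σ) (.atom wht)))
      (.conj (G (fimpl (.atom σt) (.atom shdw)))
        (.conj (G (fimpl (.atom wht)
                    (.half (fdisj (.conj (.atom wht) (.atom σ))
                                  (.conj (.atom shdw) (.neg (.atom σt)))))))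
               (fiff (.fut (.conj (φstl wht shdw) (.atom σ)))
                     (.fut (.conj (φlast shdw) (.atom σt)))))))

/-- `ψ^{truly-Sig}_shadowy`: the conjunction of `ψ_shadowy` and of `φ_transfer^{σ,σ̃}`
over all `σ ∈ Sig`. -/
noncomputable def ψtruly (wht shdw : ℕ) (Sig : Finset ℕ) (tilde : ℕ → ℕ) : Formula :=
  bigConj (ψshadowy wht shdw :: Sig.toList.map (fun σ => φtransfer wht shdw σ (tilde σ)))

def Shadowy (wht shdw : ℕ) (w : Word) : Prop :=
  Even w.length ∧
  (∀ j < w.length, Even j → wht ∈ w.getD j ∅ ∧ shdw ∉ w.getD j ∅) ∧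
  (∀ j < w.length, Odd j → shdw ∈ w.getD j ∅ ∧ wht ∉ w.getD j ∅)

/-- A shadowy word is truly Sig-shadowy if, for every `σ ∈ Sig`, only white positions may
carry `σ`, only shadow positions may carry `σ̃`, and every white position transfers
`σ` to `σ̃` on its successor. -/
def TrulyShadowy (wht shdw : ℕ) (Sig : Finset ℕ) (tilde : ℕ → ℕ) (w : Word) : Prop :=
  Shadowy wht shdw w ∧
  ∀ σ ∈ Sig,
    (∀ j < w.length, σ ∈ w.getD j ∅ → Even j) ∧
    (∀ j < w.length, tilde σ ∈ w.getD j ∅ → Odd j) ∧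
    (∀ p, Even p → p + 1 < w.length →
        (σ ∈ w.getD p ∅ ↔ tilde σ ∈ w.getD (p + 1) ∅))

/-! ### Auxiliary lemmas -/

section Aux

variable {w : Word} {i : ℕ} {φ ψ : Formula}

lemma sat_atom {a : ℕ} : Sat w i (.atom a) ↔ a ∈ w.getD i ∅ := Iff.rfl
lemma sat_neg : Sat w i (.neg φ) ↔ ¬ Sat w i φ := Iff.rfl
lemma sat_conj : Sat w i (.conj φ ψ) ↔ Sat w i φ ∧ Sat w i ψ := Iff.rfl
lemma sat_fut : Sat w i (.fut φ) ↔ ∃ j, i ≤ j ∧ j < w.length ∧ Sat w j φ := Iff.rfl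
lemma sat_half : Sat w i (.half φ) ↔ 2 * Set.ncard {j | j < i ∧ Sat w j φ} = i := Iff.rfl

lemma sat_fdisj : Sat w i (fdisj φ ψ) ↔ Sat w i φ ∨ Sat w i ψ := by
  simp only [fdisj, sat_neg, sat_conj]; tauto

lemma sat_fimpl : Sat w i (fimpl φ ψ) ↔ (Sat w i φ → Sat w i ψ) := by
  simp only [fimpl, sat_fdisj, sat_neg]; tauto

lemma sat_fiff : Sat w i (fiff φ ψ) ↔ (Sat w i φ ↔ Sat w i ψ) := by
  simp only [fiff, sat_conj, sat_fimpl]; tauto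

lemma sat_G : Sat w i (G φ) ↔ ∀ j, i ≤ j → j < w.length → Sat w j φ := by
  simp only [G, sat_neg, sat_fut]
  push_neg
  rfl

lemma sat_ftop : Sat w i ftop := by
  simp only [ftop, sat_neg, sat_conj]; tauto

lemma sat_bigConj {l : List Formula} : Sat w i (bigConj l) ↔ ∀ φ ∈ l, Sat w i φ := by
  induction l with
  | nil => simpa [bigConj] using sat_ftop
  | cons ψ l ih =>
    have : Sat w i (bigConj (ψ :: l)) ↔ Sat w i ψ ∧ Sat w i (bigConj l) := Iff.rfl
    rw [this, ih]
    simp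

lemma setOf_lt_congr {P Q : ℕ → Prop} (h : ∀ k < i, (P k ↔ Q k)) :
    {k | k < i ∧ P k} = {k | k < i ∧ Q k} := by
  ext k
  exact and_congr_right fun hk => h k hk

lemma finite_setOf_lt (P : ℕ → Prop) (i : ℕ) : {k | k < i ∧ P k}.Finite :=
  (Set.finite_Iio i).subset fun k hk => hk.1

lemma ncard_lt_zero (P : ℕ → Prop) : {k | k < 0 ∧ P k}.ncard = 0 := by
  convert Set.ncard_empty ℕ
  ext k; simp

lemma ncard_lt_succ_pos {P : ℕ → Prop} (h : P i) :
    {k | k < i + 1 ∧ P k}.ncard = {k | k < i ∧ P k}.ncard + 1 := by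
  have hins : {k | k < i + 1 ∧ P k} = insert i {k | k < i ∧ P k} := by
    ext k
    simp only [Set.mem_setOf_eq, Set.mem_insert_iff]
    constructor
    · rintro ⟨hk, hP⟩
      rcases Nat.lt_succ_iff_lt_or_eq.mp hk with h' | rfl
      · exact Or.inr ⟨h', hP⟩
      · exact Or.inl rfl
    · rintro (rfl | ⟨hk, hP⟩)
      · exact ⟨Nat.lt_succ_self _, h⟩
      · exact ⟨hk.trans (Nat.lt_succ_self _), hP⟩
  rw [hins, Set.ncard_insert_of_notMem (by simp) (finite_setOf_lt P i)]

lemma ncard_lt_succ_neg {P : ℕ → Prop} (h : ¬ P i) :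
    {k | k < i + 1 ∧ P k}.ncard = {k | k < i ∧ P k}.ncard := by
  congr 1
  ext k
  simp only [Set.mem_setOf_eq]
  constructor
  · rintro ⟨hk, hP⟩
    refine ⟨?_, hP⟩
    rcases Nat.lt_succ_iff_lt_or_eq.mp hk with h' | rfl
    · exact h'
    · exact absurd hP h
  · rintro ⟨hk, hP⟩
    exact ⟨hk.trans (Nat.lt_succ_self _), hP⟩

lemma ncard_even (i : ℕ) : {k | k < i ∧ Even k}.ncard = (i + 1) / 2 := by
  induction i with
  | zero => simp [ncard_lt_zero]
  | succ n ih =>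
    rcases Nat.even_or_odd n with h | h
    · rw [ncard_lt_succ_pos h, ih]
      rw [Nat.even_iff] at h; omega
    · rw [ncard_lt_succ_neg (Nat.not_even_iff_odd.mpr h), ih]
      rw [Nat.odd_iff] at h; omega

end Aux
section Shad

variable {wht shdw : ℕ} {w : Word}

lemma shadowy_even_iff (hS : Shadowy wht shdw w) :
    ∀ i < w.length, (wht ∈ w.getD i ∅ ↔ Even i) ∧ (shdw ∈ w.getD i ∅ ↔ Odd i) := by
  intro i hi
  rcases Nat.even_or_odd i with h | h
  · obtain ⟨h1, h2⟩ := hS.2.1 i hi h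
    have hno : ¬ Odd i := Nat.not_odd_iff_even.mpr h
    exact ⟨⟨fun _ => h, fun _ => h1⟩, ⟨fun hs => absurd hs h2, fun ho => absurd ho hno⟩⟩
  · obtain ⟨h1, h2⟩ := hS.2.2 i hi h
    have hne : ¬ Even i := Nat.not_even_iff_odd.mpr h
    exact ⟨⟨fun hw' => absurd hw' h2, fun he => absurd he hne⟩, ⟨fun _ => h, fun _ => h1⟩⟩

lemma sat_white_even (h : Sat w 0 (ψshadowy wht shdw)) :
    ∀ i < w.length, (wht ∈ w.getD i ∅ ↔ Even i) := by
  obtain ⟨-, h3⟩ := sat_conj.mp h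
  have h3' : ∀ i < w.length,
      (2 * Set.ncard {k | k < i ∧ Sat w k (.atom wht)} = i ↔ wht ∈ w.getD i ∅) := by
    intro i hi
    have := sat_G.mp h3 i (Nat.zero_le _) hi
    exact (sat_fiff.mp this)
  intro i
  induction i using Nat.strong_induction_on with
  | _ i ih =>
    intro hi
    have hset : {k | k < i ∧ Sat w k (.atom wht)} = {k | k < i ∧ Even k} :=
      setOf_lt_congr fun k hk => ih k hk (hk.trans hi)
    have := h3' i hi
    rw [hset, ncard_even] at this
    rw [← this, Nat.even_iff]
    omega

lemma sat_shadowy (hws : wht ≠ shdw) (hw : w ≠ []) (h : Sat w 0 (ψshadowy wht shdw)) :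
    Shadowy wht shdw w := by
  have hlen : 0 < w.length := List.length_pos_iff.mpr hw
  have hE := sat_white_even h
  obtain ⟨h0, h12⟩ := sat_conj.mp (sat_conj.mp h).1
  obtain ⟨h1, h2⟩ := sat_conj.mp h12
  have h1' : ∀ i < w.length, (wht ∈ w.getD i ∅ ↔ shdw ∉ w.getD i ∅) := by
    intro i hi
    have := sat_fiff.mp (sat_G.mp h1 i (Nat.zero_le _) hi)
    simpa [sat_atom, sat_neg] using this
  have hO : ∀ i < w.length, (shdw ∈ w.getD i ∅ ↔ Odd i) := by
    intro i hi
    rw [← Nat.not_even_iff_odd, ← hE i hi]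
    have := h1' i hi
    tauto
  have heven : Even w.length := by
    by_contra hodd'
    have hodd : w.length % 2 = 1 := by rw [Nat.even_iff] at hodd'; omega
    have hi : w.length - 1 < w.length := by omega
    have hievn : Even (w.length - 1) := by rw [Nat.even_iff]; omega
    have hwht : wht ∈ w.getD (w.length - 1) ∅ := (hE _ hi).mpr hievn
    have := sat_fimpl.mp (sat_G.mp h2 _ (Nat.zero_le _) hi) hwht
    obtain ⟨j, hij, hj, hsj⟩ := sat_fut.mp this
    have hjodd : Odd j := (hO j hj).mp hsj
    rw [Nat.odd_iff] at hjodd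
    rw [Nat.even_iff] at hievn
    omega
  refine ⟨heven, ?_, ?_⟩
  · intro j hj hje
    refine ⟨(hE j hj).mpr hje, fun hs => ?_⟩
    exact absurd ((hO j hj).mp hs) (Nat.not_odd_iff_even.mpr hje)
  · intro j hj hjo
    refine ⟨(hO j hj).mpr hjo, fun hw' => ?_⟩
    exact absurd hjo (Nat.not_odd_iff_even.mpr ((hE j hj).mp hw'))

lemma shadowy_sat (hw : w ≠ []) (hS : Shadowy wht shdw w) :
    Sat w 0 (ψshadowy wht shdw) := by
  have hlen : 0 < w.length := List.length_pos_iff.mpr hw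
  have hE : ∀ i < w.length, (wht ∈ w.getD i ∅ ↔ Even i) :=
    fun i hi => (shadowy_even_iff hS i hi).1
  have hO : ∀ i < w.length, (shdw ∈ w.getD i ∅ ↔ Odd i) :=
    fun i hi => (shadowy_even_iff hS i hi).2
  refine sat_conj.mpr ⟨sat_conj.mpr ⟨?_, sat_conj.mpr ⟨?_, ?_⟩⟩, ?_⟩
  · exact (hE 0 hlen).mpr (Even.zero)
  · refine sat_G.mpr fun j _ hj => sat_fiff.mpr ?_
    rw [sat_atom, sat_neg, sat_atom, hE j hj, hO j hj, ← Nat.not_even_iff_odd]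
    tauto
  · refine sat_G.mpr fun j _ hj => sat_fimpl.mpr fun hwht => ?_
    have hje : Even j := (hE j hj).mp hwht
    have hj1 : j + 1 < w.length := by
      rcases Nat.lt_or_ge (j+1) w.length with h | h
      · exact h
      · exfalso
        have : j + 1 = w.length := by omega
        have hlen2 := hS.1
        rw [Nat.even_iff] at hje hlen2
        omega
    exact sat_fut.mpr ⟨j + 1, by omega, hj1, (hO (j+1) hj1).mpr (Even.add_one hje)⟩
  · refine sat_G.mpr fun j _ hj => sat_fiff.mpr ?_
    rw [sat_half, sat_atom]
    have hset : {k | k < j ∧ Sat w k (.atom wht)} = {k | k < j ∧ Even k} :=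
      setOf_lt_congr fun k hk => hE k (hk.trans hj)
    rw [hset, ncard_even, hE j hj, Nat.even_iff]
    omega

end Shad
section Transfer

variable {wht shdw σ σt : ℕ} {w : Word}

lemma sat_φlast_iff (hS : Shadowy wht shdw w) {j : ℕ} (hj : j < w.length) :
    Sat w j (φlast shdw) ↔ j = w.length - 1 := by
  have hO : ∀ i < w.length, (shdw ∈ w.getD i ∅ ↔ Odd i) :=
    fun i hi => (shadowy_even_iff hS i hi).2
  have hlen := hS.1
  rw [Nat.even_iff] at hlen
  rw [φlast, sat_G]
  constructor
  · intro h
    by_contra hne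
    have hj1 : j + 1 < w.length := by omega
    have o1 : Odd j := (hO j (by omega)).mp (h j le_rfl (by omega))
    have o2 : Odd (j + 1) := (hO (j + 1) hj1).mp (h (j + 1) (by omega) hj1)
    rw [Nat.odd_iff] at o1 o2
    omega
  · rintro rfl
    intro k hk1 hk2
    have hk : k = w.length - 1 := by omega
    subst hk
    exact (hO _ hk2).mpr (by rw [Nat.odd_iff]; omega)

lemma sat_φstl_iff (hS : Shadowy wht shdw w) {j : ℕ} (hj : j < w.length) :
    Sat w j (φstl wht shdw) ↔ j = w.length - 2 := by
  have hE : ∀ i < w.length, (wht ∈ w.getD i ∅ ↔ Even i) :=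
    fun i hi => (shadowy_even_iff hS i hi).1
  have hlen := hS.1
  rw [Nat.even_iff] at hlen
  rw [φstl, sat_conj, sat_G]
  constructor
  · rintro ⟨h1, h2⟩
    have hje : Even j := (hE j hj).mp h1
    rw [Nat.even_iff] at hje
    by_contra hne
    have hj1 : j + 1 < w.length := by omega
    have := h2 (j + 1) (by omega) hj1
    rcases sat_fdisj.mp this with h | h
    · have he1 : Even (j + 1) := (hE (j + 1) hj1).mp h
      rw [Nat.even_iff] at he1
      omega
    · have := (sat_φlast_iff hS hj1).mp h
      omega
  · rintro rfl
    refine ⟨(hE _ hj).mpr (by rw [Nat.even_iff]; omega), ?_⟩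
    intro k hk1 hk2
    rcases Nat.eq_or_lt_of_le hk1 with h | h
    · exact sat_fdisj.mpr (Or.inl ((hE _ hk2).mpr (by rw [Nat.even_iff]; omega)))
    · have hk : k = w.length - 1 := by omega
      exact sat_fdisj.mpr (Or.inr ((sat_φlast_iff hS hk2).mpr hk))

lemma sat_transfer_iff (hw : w ≠ []) (hS : Shadowy wht shdw w) :
    Sat w 0 (φtransfer wht shdw σ σt) ↔
      ((∀ j < w.length, σ ∈ w.getD j ∅ → Even j) ∧
       (∀ j < w.length, σt ∈ w.getD j ∅ → Odd j) ∧
       (∀ p, Even p → p + 1 < w.length →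
          (σ ∈ w.getD p ∅ ↔ σt ∈ w.getD (p + 1) ∅))) := by
  have hE : ∀ i < w.length, (wht ∈ w.getD i ∅ ↔ Even i) :=
    fun i hi => (shadowy_even_iff hS i hi).1
  have hO : ∀ i < w.length, (shdw ∈ w.getD i ∅ ↔ Odd i) :=
    fun i hi => (shadowy_even_iff hS i hi).2
  have hlen0 : 0 < w.length := List.length_pos_iff.mpr hw
  have hlene := hS.1
  rw [Nat.even_iff] at hlene
  have hlen2 : 2 ≤ w.length := by omega
  set f : ℕ → Prop :=
    fun k => (Even k ∧ σ ∈ w.getD k ∅) ∨ (Odd k ∧ σt ∉ w.getD k ∅) with hf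
  have hfD : ∀ k < w.length,
      (Sat w k (fdisj (.conj (.atom wht) (.atom σ))
                      (.conj (.atom shdw) (.neg (.atom σt)))) ↔ f k) := by
    intro k hk
    rw [sat_fdisj, sat_conj, sat_conj, sat_neg, sat_atom, sat_atom, sat_atom, sat_atom,
      hE k hk, hO k hk, hf]
  have hfp : ∀ p, Even p → (f p ↔ σ ∈ w.getD p ∅) := by
    intro p hp
    have hno : ¬ Odd p := Nat.not_odd_iff_even.mpr hp
    rw [hf]; dsimp only; tauto
  have hfp1 : ∀ p, Even p → (f (p + 1) ↔ σt ∉ w.getD (p + 1) ∅) := by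
    intro p hp
    have ho : Odd (p + 1) := Even.add_one hp
    have hne : ¬ Even (p + 1) := Nat.not_even_iff_odd.mpr ho
    rw [hf]; dsimp only; tauto
  have hstep : ∀ p, Even p → ∃ c,
      {k | k < p + 2 ∧ f k}.ncard = {k | k < p ∧ f k}.ncard + c ∧
      (c = 1 ↔ (σ ∈ w.getD p ∅ ↔ σt ∈ w.getD (p + 1) ∅)) := by
    intro p hp
    have e2 : p + 2 = (p + 1) + 1 := rfl
    by_cases h1 : σ ∈ w.getD p ∅ <;> by_cases h2 : σt ∈ w.getD (p + 1) ∅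
    · refine ⟨1, ?_, ⟨fun _ => ⟨fun _ => h2, fun _ => h1⟩, fun _ => rfl⟩⟩
      rw [e2, ncard_lt_succ_neg (fun hc => ((hfp1 p hp).mp hc) h2),
        ncard_lt_succ_pos ((hfp p hp).mpr h1)]
    · refine ⟨2, ?_, ⟨fun h => absurd h (by omega), fun h => absurd (h.mp h1) h2⟩⟩
      rw [e2, ncard_lt_succ_pos ((hfp1 p hp).mpr h2),
        ncard_lt_succ_pos ((hfp p hp).mpr h1)]
    · refine ⟨0, ?_, ⟨fun h => absurd h (by omega), fun h => absurd (h.mpr h2) h1⟩⟩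
      rw [e2, ncard_lt_succ_neg (fun hc => ((hfp1 p hp).mp hc) h2),
        ncard_lt_succ_neg (fun hc => h1 ((hfp p hp).mp hc))]
      omega
    · refine ⟨1, ?_, ⟨fun _ => ⟨fun a => absurd a h1, fun b => absurd b h2⟩, fun _ => rfl⟩⟩
      rw [e2, ncard_lt_succ_pos ((hfp1 p hp).mpr h2),
        ncard_lt_succ_neg (fun hc => h1 ((hfp p hp).mp hc))]
  have hcrux :
      ((∀ i < w.length, Even i → 2 * {k | k < i ∧ f k}.ncard = i) ∧
        (σ ∈ w.getD (w.length - 2) ∅ ↔ σt ∈ w.getD (w.length - 1) ∅)) ↔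
      (∀ p, Even p → p + 1 < w.length →
        (σ ∈ w.getD p ∅ ↔ σt ∈ w.getD (p + 1) ∅)) := by
    constructor
    · rintro ⟨hC, hL⟩ p hp hp1
      rcases Nat.lt_or_ge (p + 2) w.length with h | h
      · obtain ⟨c, hc, hiff⟩ := hstep p hp
        have e1 := hC p (by omega) hp
        have e2 := hC (p + 2) h (hp.add even_two)
        exact hiff.mp (by omega)
      · have ep : p = w.length - 2 := by omega
        have e : w.length - 2 + 1 = w.length - 1 := by omega
        rw [ep, e]
        exact hL
    · intro hT
      constructor
      · intro i
        induction i using Nat.strong_induction_on with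
        | _ i ih =>
          intro hi hie
          rcases Nat.eq_zero_or_pos i with rfl | hpos
          · rw [ncard_lt_zero]
          · have h2i : 2 ≤ i := by
              rw [Nat.even_iff] at hie; omega
            obtain ⟨p, rfl⟩ : ∃ p, i = p + 2 := ⟨i - 2, by omega⟩
            have hpe : Even p := by
              rw [Nat.even_iff] at hie ⊢; omega
            obtain ⟨c, hc, hiff⟩ := hstep p hpe
            have hN := ih p (by omega) (by omega) hpe
            have hc1 : c = 1 := hiff.mpr (hT p hpe (by omega))
            omega
      · have := hT (w.length - 2) (by rw [Nat.even_iff]; omega) (by omega)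
        have e : w.length - 2 + 1 = w.length - 1 := by omega
        rwa [e] at this
  have hψ : Sat w 0 (ψshadowy wht shdw) := shadowy_sat hw hS
  have hC1 : Sat w 0 (G (fimpl (.atom σ) (.atom wht))) ↔
      (∀ j < w.length, σ ∈ w.getD j ∅ → Even j) := by
    rw [sat_G]
    constructor
    · intro h j hj hσ
      exact (hE j hj).mp (sat_fimpl.mp (h j (Nat.zero_le _) hj) hσ)
    · intro h j _ hj
      exact sat_fimpl.mpr fun hσ => (hE j hj).mpr (h j hj hσ)
  have hC2 : Sat w 0 (G (fimpl (.atom σt) (.atom shdw))) ↔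
      (∀ j < w.length, σt ∈ w.getD j ∅ → Odd j) := by
    rw [sat_G]
    constructor
    · intro h j hj hσ
      exact (hO j hj).mp (sat_fimpl.mp (h j (Nat.zero_le _) hj) hσ)
    · intro h j _ hj
      exact sat_fimpl.mpr fun hσ => (hO j hj).mpr (h j hj hσ)
  have hC3 : Sat w 0 (G (fimpl (.atom wht)
        (.half (fdisj (.conj (.atom wht) (.atom σ))
                      (.conj (.atom shdw) (.neg (.atom σt))))))) ↔
      (∀ i < w.length, Even i → 2 * {k | k < i ∧ f k}.ncard = i) := by
    rw [sat_G]
    constructor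
    · intro h i hi hie
      have hh := sat_fimpl.mp (h i (Nat.zero_le _) hi) (sat_atom.mpr ((hE i hi).mpr hie))
      rw [sat_half] at hh
      rwa [setOf_lt_congr (fun k hk => hfD k (hk.trans hi))] at hh
    · intro h i _ hi
      refine sat_fimpl.mpr fun hwht => ?_
      rw [sat_half, setOf_lt_congr (fun k hk => hfD k (hk.trans hi))]
      exact h i hi ((hE i hi).mp hwht)
  have hstl : Sat w 0 (.fut (.conj (φstl wht shdw) (.atom σ))) ↔
      σ ∈ w.getD (w.length - 2) ∅ := by
    rw [sat_fut]
    constructor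
    · rintro ⟨j, -, hj, hsat⟩
      obtain ⟨h1, h2⟩ := sat_conj.mp hsat
      have hje := (sat_φstl_iff hS hj).mp h1
      rw [sat_atom] at h2
      rwa [hje] at h2
    · intro hσ
      exact ⟨w.length - 2, Nat.zero_le _, by omega,
        sat_conj.mpr ⟨(sat_φstl_iff hS (by omega)).mpr rfl, sat_atom.mpr hσ⟩⟩
  have hlst : Sat w 0 (.fut (.conj (φlast shdw) (.atom σt))) ↔
      σt ∈ w.getD (w.length - 1) ∅ := by
    rw [sat_fut]
    constructor
    · rintro ⟨j, -, hj, hsat⟩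
      obtain ⟨h1, h2⟩ := sat_conj.mp hsat
      have hje := (sat_φlast_iff hS hj).mp h1
      rw [sat_atom] at h2
      rwa [hje] at h2
    · intro hσ
      exact ⟨w.length - 1, Nat.zero_le _, by omega,
        sat_conj.mpr ⟨(sat_φlast_iff hS (by omega)).mpr rfl, sat_atom.mpr hσ⟩⟩
  have hC4 : Sat w 0 (fiff (.fut (.conj (φstl wht shdw) (.atom σ)))
        (.fut (.conj (φlast shdw) (.atom σt)))) ↔
      (σ ∈ w.getD (w.length - 2) ∅ ↔ σt ∈ w.getD (w.length - 1) ∅) := by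
    rw [sat_fiff, hstl, hlst]
  simp only [φtransfer]
  rw [sat_conj, sat_conj, sat_conj, sat_conj, hC1, hC2, hC3, hC4]
  constructor
  · rintro ⟨-, t1, t2, t3, t4⟩
    exact ⟨t1, t2, hcrux.mp ⟨t3, t4⟩⟩
  · rintro ⟨t1, t2, t3⟩
    have h34 := hcrux.mpr t3
    exact ⟨hψ, t1, t2, h34.1, h34.2⟩

end Transfer

theorem ψtruly_defines_trulyShadowy
    (wht shdw : ℕ) (hws : wht ≠ shdw)
    (Sig : Finset ℕ) (tilde : ℕ → ℕ)
    (hSigw : ∀ σ ∈ Sig, σ ≠ wht ∧ σ ≠ shdw)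
    (htilde_ne : ∀ σ ∈ Sig, tilde σ ≠ σ ∧ tilde σ ∉ Sig ∧ tilde σ ≠ wht ∧ tilde σ ≠ shdw)
    (htilde_inj : ∀ σ ∈ Sig, ∀ σ' ∈ Sig, tilde σ = tilde σ' → σ = σ')
    (w : Word) (hw : w ≠ []) :
    Sat w 0 (ψtruly wht shdw Sig tilde) ↔ TrulyShadowy wht shdw Sig tilde w := by
  rw [ψtruly, sat_bigConj]
  constructor
  · intro h
    have hψ : Sat w 0 (ψshadowy wht shdw) := h _ List.mem_cons_self
    have hS : Shadowy wht shdw w := sat_shadowy hws hw hψ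
    refine ⟨hS, fun σ hσ => ?_⟩
    have ht : Sat w 0 (φtransfer wht shdw σ (tilde σ)) :=
      h _ (List.mem_cons_of_mem _ (List.mem_map.mpr ⟨σ, Finset.mem_toList.mpr hσ, rfl⟩))
    exact (sat_transfer_iff hw hS).mp ht
  · rintro ⟨hS, hT⟩ φ hφ
    rcases List.mem_cons.mp hφ with rfl | hφ
    · exact shadowy_sat hw hS
    · obtain ⟨σ, hσ, rfl⟩ := List.mem_map.mp hφ
      exact (sat_transfer_iff hw hS).mpr (hT σ (Finset.mem_toList.mp hσ))
end TrulyShadowy10
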